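/- Let d, m, n be integers with d ≥ 1, m ≥ 0, n ≥ d and m + n − d ≥ 1, let λ ∈ ℂ, and let φ ∈ ℂ⟦t,s⟧ be a formal power series with nonzero constant term. Then there exists ψ ∈ ℂ⟦t,s⟧ with constant term λ/d such that the series σ(t,s) = s·(1 + t^m·s^{n−d}·φ(t,s)·ψ(t,s)) satisfies σ(t,s)^d = s^d + λ·t^m·σ(t,s)^n·φ(t, σ(t,s)), where φ(t, σ(t,s)) denotes substitution of the pair (t, σ) (both with zero constant term) into φ. -/

import Mathlib

open MvPowerSeries in
/-- Substitution (composition) of formal power series:  `substPS v f` is the formal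
power series `f (v 0, v 1, …)` obtained by substituting the family `v` of power series
into `f`.  When every `v i` has zero constant coefficient (the only case in which this
notion is used), the coefficient of a monomial `e` in `f (v 0, v 1, …)` is the finite
sum, over the multi-degrees `d` of total degree at most the total degree of `e`
(coordinatewise bounded by it), of `(coeff d f) * coeff e (∏ i, (v i) ^ d i)`;
this is the usual composition of formal power series. -/
noncomputable def substPS {σ τ : Type*} [Fintype σ] [DecidableEq σ] {R : Type*}
    [CommSemiring R] (v : σ → MvPowerSeries τ R) (f : MvPowerSeries σ R) :
    MvPowerSeries τ R :=
  fun e => ∑ d ∈ Finset.Iic (Finsupp.equivFunOnFinite.symm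
      fun _ : σ => e.sum fun _ n => n),
    MvPowerSeries.coeff (R := R) d f * MvPowerSeries.coeff (R := R) e (∏ i, (v i) ^ (d i))


open MvPowerSeries Finset

/-- Total degree of an exponent. -/
def degOf (e : Fin 2 →₀ ℕ) : ℕ := e.sum fun _ n => n

lemma degOf_add (p q : Fin 2 →₀ ℕ) : degOf (p + q) = degOf p + degOf q :=
  Finsupp.sum_add_index' (fun _ => rfl) (fun _ _ _ => rfl)

lemma degOf_eq_zero {e : Fin 2 →₀ ℕ} (h : degOf e = 0) : e = 0 := by
  ext a
  by_cases ha : a ∈ e.support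
  · exact absurd (Finset.sum_eq_zero_iff.mp h a ha) (Finsupp.mem_support_iff.mp ha)
  · simpa using Finsupp.notMem_support_iff.mp ha

/-- Two power series agree on all coefficients of total degree `< k`. -/
def EqBelow (k : ℕ) (a b : MvPowerSeries (Fin 2) ℂ) : Prop :=
  ∀ e : Fin 2 →₀ ℕ, degOf e < k → MvPowerSeries.coeff (R := ℂ) e a = MvPowerSeries.coeff (R := ℂ) e b

lemma EqBelow.refl (k : ℕ) (a : MvPowerSeries (Fin 2) ℂ) : EqBelow k a a := fun _ _ => rfl

lemma EqBelow.symm {k a b} (h : EqBelow k a b) : EqBelow k b a := fun e he => (h e he).symm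

lemma EqBelow.trans {k a b c} (h : EqBelow k a b) (h' : EqBelow k b c) : EqBelow k a c :=
  fun e he => (h e he).trans (h' e he)

lemma EqBelow.mono {k k' a b} (hk : k ≤ k') (h : EqBelow k' a b) : EqBelow k a b :=
  fun e he => h e (lt_of_lt_of_le he hk)

lemma EqBelow.add {k a b a' b'} (h : EqBelow k a b) (h' : EqBelow k a' b') :
    EqBelow k (a + a') (b + b') := fun e he => by
  rw [map_add, map_add, h e he, h' e he]

lemma EqBelow.mul {k a b a' b'} (h : EqBelow k a b) (h' : EqBelow k a' b') :
    EqBelow k (a * a') (b * b') := fun e he => by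
  rw [MvPowerSeries.coeff_mul, MvPowerSeries.coeff_mul]
  refine Finset.sum_congr rfl fun p hp => ?_
  have hpq : p.1 + p.2 = e := Finset.HasAntidiagonal.mem_antidiagonal.mp hp
  have h1 : degOf p.1 < k := by
    have := degOf_add p.1 p.2; rw [hpq] at this; omega
  have h2 : degOf p.2 < k := by
    have := degOf_add p.1 p.2; rw [hpq] at this; omega
  rw [h p.1 h1, h' p.2 h2]

lemma EqBelow.pow {k a b} (h : EqBelow k a b) (j : ℕ) : EqBelow k (a ^ j) (b ^ j) := by
  induction j with
  | zero => simpa using EqBelow.refl k 1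
  | succ j ih => rw [pow_succ, pow_succ]; exact ih.mul h

lemma EqBelow.sum {k} {s : Finset ℕ} {f g : ℕ → MvPowerSeries (Fin 2) ℂ}
    (h : ∀ i ∈ s, EqBelow k (f i) (g i)) : EqBelow k (∑ i ∈ s, f i) (∑ i ∈ s, g i) :=
  fun e he => by
    rw [map_sum, map_sum]
    exact Finset.sum_congr rfl fun i hi => h i hi e he

lemma EqBelow.shift {k} {c a b : MvPowerSeries (Fin 2) ℂ}
    (hc : constantCoeff (σ := Fin 2) (R := ℂ) c = 0) (h : EqBelow k a b) :
    EqBelow (k + 1) (c * a) (c * b) := fun e he => by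
  rw [MvPowerSeries.coeff_mul, MvPowerSeries.coeff_mul]
  refine Finset.sum_congr rfl fun p hp => ?_
  have hpq : p.1 + p.2 = e := Finset.HasAntidiagonal.mem_antidiagonal.mp hp
  by_cases h1 : p.1 = 0
  · rw [h1, MvPowerSeries.coeff_zero_eq_constantCoeff_apply, hc, zero_mul, zero_mul]
  · have hd1 : 1 ≤ degOf p.1 := by
      rcases Nat.eq_zero_or_pos (degOf p.1) with h0 | h0
      · exact absurd (degOf_eq_zero h0) h1
      · exact h0
    have h2 : degOf p.2 < k := by
      have := degOf_add p.1 p.2; rw [hpq] at this; omega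
    rw [h p.2 h2]

lemma EqBelow.inv {k} {a b : MvPowerSeries (Fin 2) ℂ}
    (ha : constantCoeff (σ := Fin 2) (R := ℂ) a ≠ 0) (hb : constantCoeff (σ := Fin 2) (R := ℂ) b ≠ 0)
    (h : EqBelow k a b) : EqBelow k a⁻¹ b⁻¹ := by
  have e1 : a * a⁻¹ = 1 := MvPowerSeries.mul_inv_cancel a ha
  have e2 : b * b⁻¹ = 1 := MvPowerSeries.mul_inv_cancel b hb
  have key : a⁻¹ - b⁻¹ = a⁻¹ * b⁻¹ * (b - a) := by linear_combination (-(a⁻¹ : MvPowerSeries (Fin 2) ℂ)) * e2 + (b⁻¹ : MvPowerSeries (Fin 2) ℂ) * e1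
  have hsub : EqBelow k (b - a) 0 := fun e he => by
    rw [map_sub, h e he, sub_self, map_zero]
  have hmul : EqBelow k (a⁻¹ * b⁻¹ * (b - a)) (a⁻¹ * b⁻¹ * 0) :=
    (EqBelow.refl k _).mul hsub
  intro e he
  have := hmul e he
  rw [mul_zero, map_zero, ← key, map_sub] at this
  exact sub_eq_zero.mp this



noncomputable def Xt : MvPowerSeries (Fin 2) ℂ := X 0
noncomputable def Xs : MvPowerSeries (Fin 2) ℂ := X 1

lemma Xt_eq : Xt = X 0 := rfl
lemma Xs_eq : Xs = X 1 := rfl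

lemma constantCoeff_Xt : constantCoeff (σ := Fin 2) (R := ℂ) Xt = 0 := by
  rw [Xt_eq]; exact MvPowerSeries.constantCoeff_X 0

lemma constantCoeff_Xs : constantCoeff (σ := Fin 2) (R := ℂ) Xs = 0 := by
  rw [Xs_eq]; exact MvPowerSeries.constantCoeff_X 1

lemma coeff_substPS (v : Fin 2 → MvPowerSeries (Fin 2) ℂ) (f : MvPowerSeries (Fin 2) ℂ)
    (e : Fin 2 →₀ ℕ) :
    MvPowerSeries.coeff (R := ℂ) e (substPS v f) =
      ∑ dd ∈ Finset.Iic (Finsupp.equivFunOnFinite.symm fun _ : Fin 2 => e.sum fun _ n => n),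
        MvPowerSeries.coeff (R := ℂ) dd f * MvPowerSeries.coeff (R := ℂ) e ((v 0) ^ (dd 0) * (v 1) ^ (dd 1)) := by
  rw [MvPowerSeries.coeff_apply, substPS]
  exact Finset.sum_congr rfl fun dd _ => by rw [Fin.prod_univ_two]

lemma EqBelow.subst {k} {s₁ s₂ φ : MvPowerSeries (Fin 2) ℂ} (h : EqBelow k s₁ s₂) :
    EqBelow k (substPS ![Xt, s₁] φ) (substPS ![Xt, s₂] φ) := fun e he => by
  rw [coeff_substPS, coeff_substPS]
  refine Finset.sum_congr rfl fun dd _ => ?_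
  congr 1
  simp only [Matrix.cons_val_zero, Matrix.cons_val_one, Matrix.head_cons]
  exact ((EqBelow.refl k _).mul (h.pow (dd 1))) e he

lemma constantCoeff_substPS (s φ : MvPowerSeries (Fin 2) ℂ) :
    constantCoeff (σ := Fin 2) (R := ℂ) (substPS ![Xt, s] φ) = constantCoeff (σ := Fin 2) (R := ℂ) φ := by
  rw [← MvPowerSeries.coeff_zero_eq_constantCoeff_apply, coeff_substPS]
  have hb : (Finsupp.equivFunOnFinite.symm fun _ : Fin 2 => (0 : Fin 2 →₀ ℕ).sum fun _ n => n)
      = (0 : Fin 2 →₀ ℕ) := by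
    ext a; simp
  rw [hb]
  rw [show (Finset.Iic (0 : Fin 2 →₀ ℕ)) = {0} by ext x; simp [Finset.mem_Iic, le_zero_iff]]
  simp [MvPowerSeries.coeff_zero_eq_constantCoeff_apply]

lemma one_add_pow_eq {R : Type*} [CommRing R] (u : R) (d : ℕ) :
    (1 + u) ^ d = 1 + u * ∑ k ∈ Finset.range d, (d.choose (k + 1) : R) * u ^ k := by
  rw [add_comm (1 : R) u, add_pow, Finset.sum_range_succ']
  simp only [one_pow, pow_zero, Nat.choose_zero_right, Nat.cast_one, mul_one, one_mul]
  rw [add_comm, Finset.mul_sum]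
  congr 1
  refine Finset.sum_congr rfl fun k _ => ?_
  ring


noncomputable def Pser (d : ℕ) (u : MvPowerSeries (Fin 2) ℂ) : MvPowerSeries (Fin 2) ℂ :=
  ∑ k ∈ Finset.range d, (d.choose (k + 1) : MvPowerSeries (Fin 2) ℂ) * u ^ k

lemma constantCoeff_Pser {d : ℕ} (hd : 1 ≤ d) {u : MvPowerSeries (Fin 2) ℂ}
    (hu : constantCoeff (σ := Fin 2) (R := ℂ) u = 0) :
    constantCoeff (σ := Fin 2) (R := ℂ) (Pser d u) = (d : ℂ) := by
  rw [Pser, map_sum]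
  rw [Finset.sum_eq_single_of_mem 0 (Finset.mem_range.mpr hd)]
  · simp
  · intro k _ hk
    rw [map_mul, map_pow, hu, zero_pow hk, mul_zero]

lemma constantCoeff_Pser_ne {d : ℕ} (hd : 1 ≤ d) {u : MvPowerSeries (Fin 2) ℂ}
    (hu : constantCoeff (σ := Fin 2) (R := ℂ) u = 0) :
    constantCoeff (σ := Fin 2) (R := ℂ) (Pser d u) ≠ 0 := by
  rw [constantCoeff_Pser hd hu]
  exact_mod_cast Nat.one_le_iff_ne_zero.mp hd

noncomputable def Tmap (d m n : ℕ) (lam : ℂ) (φ ψ : MvPowerSeries (Fin 2) ℂ) :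
    MvPowerSeries (Fin 2) ℂ :=
  C (σ := Fin 2) (R := ℂ) lam * (1 + Xt ^ m * Xs ^ (n - d) * φ * ψ) ^ n *
    substPS ![Xt, Xs * (1 + Xt ^ m * Xs ^ (n - d) * φ * ψ)] φ * φ⁻¹ *
    (Pser d (Xt ^ m * Xs ^ (n - d) * φ * ψ))⁻¹

section Main

variable {d m n : ℕ} {lam : ℂ} {φ : MvPowerSeries (Fin 2) ℂ}

lemma Tmap_def (ψ : MvPowerSeries (Fin 2) ℂ) : Tmap d m n lam φ ψ =
    C (σ := Fin 2) (R := ℂ) lam * (1 + Xt ^ m * Xs ^ (n - d) * φ * ψ) ^ n *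
    substPS ![Xt, Xs * (1 + Xt ^ m * Xs ^ (n - d) * φ * ψ)] φ * φ⁻¹ *
    (Pser d (Xt ^ m * Xs ^ (n - d) * φ * ψ))⁻¹ := rfl

lemma constCoeff_c (hnd : d ≤ n) (hmnd : 1 ≤ m + n - d) :
    constantCoeff (σ := Fin 2) (R := ℂ) (Xt ^ m * Xs ^ (n - d) * φ) = 0 := by
  have h : m ≠ 0 ∨ n - d ≠ 0 := by omega
  rcases h with h | h
  · rw [map_mul, map_mul, map_pow, constantCoeff_Xt, zero_pow h, zero_mul, zero_mul]
  · rw [map_mul, map_mul, map_pow, map_pow, constantCoeff_Xt, constantCoeff_Xs,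
      zero_pow h, mul_zero, zero_mul]

lemma constCoeff_u (hnd : d ≤ n) (hmnd : 1 ≤ m + n - d) (ψ : MvPowerSeries (Fin 2) ℂ) :
    constantCoeff (σ := Fin 2) (R := ℂ) (Xt ^ m * Xs ^ (n - d) * φ * ψ) = 0 := by
  rw [map_mul, constCoeff_c hnd hmnd, zero_mul]

lemma contract (hd : 1 ≤ d) (hnd : d ≤ n) (hmnd : 1 ≤ m + n - d)
    {k : ℕ} {ψ₁ ψ₂ : MvPowerSeries (Fin 2) ℂ}
    (h : EqBelow k ψ₁ ψ₂) :
    EqBelow (k + 1) (Tmap d m n lam φ ψ₁) (Tmap d m n lam φ ψ₂) := by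
  have hu : EqBelow (k + 1) (Xt ^ m * Xs ^ (n - d) * φ * ψ₁)
      (Xt ^ m * Xs ^ (n - d) * φ * ψ₂) :=
    EqBelow.shift (c := Xt ^ m * Xs ^ (n - d) * φ) (constCoeff_c hnd hmnd) h
  have hone : EqBelow (k + 1) (1 + Xt ^ m * Xs ^ (n - d) * φ * ψ₁)
      (1 + Xt ^ m * Xs ^ (n - d) * φ * ψ₂) := (EqBelow.refl _ 1).add hu
  have hσ := (EqBelow.refl (k + 1) Xs).mul hone
  have hΦ := hσ.subst (φ := φ)
  have hP : EqBelow (k + 1) (Pser d (Xt ^ m * Xs ^ (n - d) * φ * ψ₁))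
      (Pser d (Xt ^ m * Xs ^ (n - d) * φ * ψ₂)) :=
    EqBelow.sum fun i _ => (EqBelow.refl _ _).mul (hu.pow i)
  have hPinv := hP.inv (constantCoeff_Pser_ne hd (constCoeff_u hnd hmnd ψ₁))
    (constantCoeff_Pser_ne hd (constCoeff_u hnd hmnd ψ₂))
  rw [Tmap_def, Tmap_def]
  exact ((((EqBelow.refl _ (C (σ := Fin 2) (R := ℂ) lam)).mul (hone.pow n)).mul hΦ).mul
    (EqBelow.refl _ φ⁻¹)).mul hPinv

end Main

noncomputable def seqT (d m n : ℕ) (lam : ℂ) (φ : MvPowerSeries (Fin 2) ℂ) :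
    ℕ → MvPowerSeries (Fin 2) ℂ
  | 0 => 0
  | j + 1 => Tmap d m n lam φ (seqT d m n lam φ j)

lemma seqT_succ (d m n : ℕ) (lam : ℂ) (φ : MvPowerSeries (Fin 2) ℂ) (j : ℕ) :
    seqT d m n lam φ (j + 1) = Tmap d m n lam φ (seqT d m n lam φ j) := rfl

lemma seq_stable {d m n : ℕ} {lam : ℂ} {φ : MvPowerSeries (Fin 2) ℂ}
    (hd : 1 ≤ d) (hnd : d ≤ n) (hmnd : 1 ≤ m + n - d) :
    ∀ j, EqBelow j (seqT d m n lam φ j) (seqT d m n lam φ (j + 1))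
  | 0 => fun e he => absurd he (Nat.not_lt_zero _)
  | j + 1 => by
      rw [seqT_succ, seqT_succ]
      exact contract hd hnd hmnd (seq_stable hd hnd hmnd j)

noncomputable def psiT (d m n : ℕ) (lam : ℂ) (φ : MvPowerSeries (Fin 2) ℂ) :
    MvPowerSeries (Fin 2) ℂ :=
  fun e => seqT d m n lam φ (degOf e + 1) e

section Main2

variable {d m n : ℕ} {lam : ℂ} {φ : MvPowerSeries (Fin 2) ℂ}

lemma seq_stable' (hd : 1 ≤ d) (hnd : d ≤ n) (hmnd : 1 ≤ m + n - d) {j j' : ℕ} (hj : j ≤ j') :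
    EqBelow j (seqT d m n lam φ j) (seqT d m n lam φ j') := by
  induction j' , hj using Nat.le_induction with
  | base => exact EqBelow.refl _ _
  | succ j' hjj ih => exact ih.trans ((seq_stable hd hnd hmnd j').mono hjj)

end Main2

section Main3
variable {d m n : ℕ} {lam : ℂ} {φ : MvPowerSeries (Fin 2) ℂ}

lemma psiT_apply (e : Fin 2 →₀ ℕ) :
    psiT d m n lam φ e = seqT d m n lam φ (degOf e + 1) e := rfl

lemma psi_eq (hd : 1 ≤ d) (hnd : d ≤ n) (hmnd : 1 ≤ m + n - d) (k : ℕ) :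
    EqBelow k (psiT d m n lam φ) (seqT d m n lam φ k) := by
  intro e he
  calc MvPowerSeries.coeff (R := ℂ) e (psiT d m n lam φ)
      = MvPowerSeries.coeff (R := ℂ) e (seqT d m n lam φ (degOf e + 1)) := by
        rw [MvPowerSeries.coeff_apply, MvPowerSeries.coeff_apply, psiT_apply]
    _ = MvPowerSeries.coeff (R := ℂ) e (seqT d m n lam φ k) :=
        seq_stable' hd hnd hmnd (by omega) e (by omega)

lemma psi_fix (hd : 1 ≤ d) (hnd : d ≤ n) (hmnd : 1 ≤ m + n - d) :
    Tmap d m n lam φ (psiT d m n lam φ) = psiT d m n lam φ := by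
  apply MvPowerSeries.ext
  intro e
  set k := degOf e + 1 with hk
  have h1 : EqBelow (k + 1) (Tmap d m n lam φ (psiT d m n lam φ))
      (Tmap d m n lam φ (seqT d m n lam φ k)) := contract hd hnd hmnd (psi_eq hd hnd hmnd k)
  rw [← seqT_succ d m n lam φ k] at h1
  have h2 := psi_eq (lam := lam) (φ := φ) hd hnd hmnd (k + 1)
  rw [h1 e (by omega), ← h2 e (by omega)]

end Main3


open MvPowerSeries in
/-- Let `d, m, n` be integers with `d ≥ 1`, `m ≥ 0`, `n ≥ d` and `m + n − d ≥ 1`, let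
`λ ∈ ℂ`, and let `φ ∈ ℂ⟦t,s⟧` be a formal power series (the variables being `t = X 0`
and `s = X 1`) with nonzero constant term.  Then there exists `ψ ∈ ℂ⟦t,s⟧` with
constant term `λ/d` such that the series `σ(t,s) = s·(1 + t^m·s^{n−d}·φ(t,s)·ψ(t,s))`
satisfies `σ(t,s)^d = s^d + λ·t^m·σ(t,s)^n·φ(t, σ(t,s))`, where `φ(t, σ(t,s))` denotes
substitution of the pair `(t, σ)` (both with zero constant term) into `φ`. -/
theorem exists_puiseux_reparametrization (d m n : ℕ) (hd : 1 ≤ d) (hnd : d ≤ n)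
    (hmnd : 1 ≤ m + n - d) (lam : ℂ) (φ : MvPowerSeries (Fin 2) ℂ)
    (hφ : constantCoeff (σ := Fin 2) (R := ℂ) φ ≠ 0) :
    ∃ ψ σ : MvPowerSeries (Fin 2) ℂ,
      constantCoeff (σ := Fin 2) (R := ℂ) ψ = lam / (d : ℂ) ∧
      σ = X 1 * (1 + X 0 ^ m * X 1 ^ (n - d) * φ * ψ) ∧
      σ ^ d = X 1 ^ d + C (σ := Fin 2) (R := ℂ) lam * X 0 ^ m * σ ^ n * substPS ![X 0, σ] φ := by
  set ψ := psiT d m n lam φ with hψdef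
  have hfix := psi_fix (lam := lam) (φ := φ) hd hnd hmnd
  rw [Tmap_def] at hfix
  set u := Xt ^ m * Xs ^ (n - d) * φ * ψ with hu
  set σ' := Xs * (1 + u) with hσ
  have hfix' : ψ = C (σ := Fin 2) (R := ℂ) lam * (1 + u) ^ n * substPS ![Xt, σ'] φ * φ⁻¹
      * (Pser d u)⁻¹ := hfix.symm
  have hu0 : constantCoeff (σ := Fin 2) (R := ℂ) u = 0 := constCoeff_u hnd hmnd ψ
  have hP0 : constantCoeff (σ := Fin 2) (R := ℂ) (Pser d u) = (d : ℂ) := constantCoeff_Pser hd hu0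
  have hPne : constantCoeff (σ := Fin 2) (R := ℂ) (Pser d u) ≠ 0 := constantCoeff_Pser_ne hd hu0
  have hdC : (d : ℂ) ≠ 0 := by exact_mod_cast Nat.one_le_iff_ne_zero.mp hd
  refine ⟨ψ, σ', ?_, ?_, ?_⟩
  · rw [hfix']
    rw [map_mul, map_mul, map_mul, map_mul, map_pow, map_add, map_one, hu0,
      constantCoeff_substPS, MvPowerSeries.constantCoeff_inv, MvPowerSeries.constantCoeff_inv,
      hP0, MvPowerSeries.constantCoeff_C]
    rw [add_zero, one_pow, mul_one]
    field_simp
  · rw [hσ, hu, Xt_eq, Xs_eq]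
  · rw [← Xt_eq, ← Xs_eq]
    have hφi : φ * φ⁻¹ = 1 := MvPowerSeries.mul_inv_cancel φ hφ
    have hPi : Pser d u * (Pser d u)⁻¹ = 1 := MvPowerSeries.mul_inv_cancel _ hPne
    have key : ψ * (φ * Pser d u)
        = C (σ := Fin 2) (R := ℂ) lam * ((1 + u) ^ n * substPS ![Xt, σ'] φ) := by
      rw [hfix']
      calc C (σ := Fin 2) (R := ℂ) lam * (1 + u) ^ n * substPS ![Xt, σ'] φ * φ⁻¹ * (Pser d u)⁻¹
            * (φ * Pser d u)
          = C (σ := Fin 2) (R := ℂ) lam * ((1 + u) ^ n * substPS ![Xt, σ'] φ)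
            * ((φ * φ⁻¹) * (Pser d u * (Pser d u)⁻¹)) := by ring
        _ = _ := by rw [hφi, hPi, mul_one, mul_one]
    have key2 : (1 + u) ^ d = 1 + C (σ := Fin 2) (R := ℂ) lam * Xt ^ m * Xs ^ (n - d)
        * ((1 + u) ^ n * substPS ![Xt, σ'] φ) := by
      rw [one_add_pow_eq u d]
      have hup : u * (∑ k ∈ Finset.range d,
          ((d.choose (k + 1) : MvPowerSeries (Fin 2) ℂ)) * u ^ k)
          = Xt ^ m * Xs ^ (n - d) * (ψ * (φ * Pser d u)) := by
        rw [Pser, hu]; ring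
      rw [hup, key]; ring
    have hxn : (Xs : MvPowerSeries (Fin 2) ℂ) ^ (n - d) * Xs ^ d = Xs ^ n := by
      rw [← pow_add]; congr 1; omega
    rw [hσ, mul_pow, mul_pow, key2]
    linear_combination (C (σ := Fin 2) (R := ℂ) lam * Xt ^ m * (1 + u) ^ n
      * substPS ![Xt, σ'] φ) * hxn
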